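/- The number of maximal repeats in a string of length n is at most n. -/

import Mathlib

def occs {α : Type*} [DecidableEq α] (w u : List α) : Finset ℕ :=
  (Finset.range (w.length + 1)).filter (fun i => u <+: w.drop i)

def countOcc {α : Type*} [DecidableEq α] (w u : List α) : ℕ := (occs w u).card
def MaximalRepeat {α : Type*} [DecidableEq α] (w u : List α) : Prop :=
  u <:+: w ∧ 2 ≤ countOcc w u ∧
    ∀ v : List α, u <:+: v → v ≠ u → countOcc w v < countOcc w u

/-- Number of maximal elements of a family. -/
private def nmax (F : Finset (Finset ℕ)) : ℕ :=
  (F.filter (fun A => ∀ B ∈ F, A ⊆ B → A = B)).card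

private lemma laminar_bound (n : ℕ) : ∀ F : Finset (Finset ℕ), F.card = n →
    (∀ A ∈ F, 2 ≤ A.card) →
    (∀ A ∈ F, ∀ B ∈ F, A ⊆ B ∨ B ⊆ A ∨ Disjoint A B) →
    F.card + nmax F ≤ (F.sup id).card := by
  induction n using Nat.strong_induction_on with
  | _ n IH =>
  intro F hcard hsize hlam
  rcases F.eq_empty_or_nonempty with rfl | hne
  · simp [nmax]
  obtain ⟨A, hAF, hAmax⟩ := F.exists_maximal hne
  classical
  set F1 := (F.erase A).filter (fun B => B ⊆ A) with hF1
  set F2 := (F.erase A).filter (fun B => ¬ B ⊆ A) with hF2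
  have hF1sub : ∀ B ∈ F1, B ∈ F ∧ B ≠ A ∧ B ⊆ A := by
    intro B hB
    simp only [hF1, Finset.mem_filter, Finset.mem_erase] at hB
    exact ⟨hB.1.2, hB.1.1, hB.2⟩
  have hF2dis : ∀ B ∈ F2, Disjoint A B := by
    intro B hB
    simp only [hF2, Finset.mem_filter, Finset.mem_erase] at hB
    rcases hlam A hAF B hB.1.2 with h | h | h
    · exact absurd (le_antisymm h (hAmax hB.1.2 h)) (fun e => hB.1.1 e.symm)
    · exact absurd h hB.2
    · exact h
  have hsplit : F.erase A = F1 ∪ F2 := (Finset.filter_union_filter_not_eq _ _).symm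
  have hF1F : F1 ⊆ F := fun B hB => (hF1sub B hB).1
  have hF2F : F2 ⊆ F := fun B hB => by
    simp only [hF2, Finset.mem_filter, Finset.mem_erase] at hB; exact hB.1.2
  have hc1 : F1.card < n := by
    rw [← hcard]
    exact lt_of_le_of_lt (Finset.card_le_card (hsplit ▸ Finset.subset_union_left))
      (Finset.card_erase_lt_of_mem hAF)
  have hc2 : F2.card < n := by
    rw [← hcard]
    exact lt_of_le_of_lt (Finset.card_le_card (hsplit ▸ Finset.subset_union_right))
      (Finset.card_erase_lt_of_mem hAF)
  have IH1 := IH _ hc1 F1 rfl (fun B hB => hsize B (hF1F hB))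
    (fun B hB C hC => hlam B (hF1F hB) C (hF1F hC))
  have IH2 := IH _ hc2 F2 rfl (fun B hB => hsize B (hF2F hB))
    (fun B hB C hC => hlam B (hF2F hB) C (hF2F hC))
  -- unions
  have hu1 : F1.sup id ⊆ A := Finset.sup_le (fun B hB => (hF1sub B hB).2.2)
  have hu2dis : Disjoint A (F2.sup id) := by
    rw [Finset.disjoint_sup_right]; exact fun B hB => hF2dis B hB
  have hsupF : F.sup id = A ∪ F2.sup id := by
    conv_lhs => rw [← Finset.insert_erase hAF]
    rw [Finset.sup_insert, hsplit, Finset.sup_union]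
    have : (id A : Finset ℕ) ⊔ (F1.sup id ⊔ F2.sup id)
        = (A ∪ F2.sup id) := by
      rw [← sup_assoc]
      congr 1
      simpa using sup_eq_left.mpr hu1
    exact this
  have hcardsup : (F.sup id).card = A.card + (F2.sup id).card := by
    rw [hsupF, Finset.card_union_of_disjoint hu2dis]
  -- card of F
  have hFcard : F.card = 1 + F1.card + F2.card := by
    have hdis : Disjoint F1 F2 := Finset.disjoint_filter_filter_not _ _ _
    rw [← Finset.insert_erase hAF, hsplit]
    rw [Finset.card_insert_of_notMem (by
      rw [← hsplit]; exact Finset.notMem_erase _ _),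
      Finset.card_union_of_disjoint hdis]
    ring
  -- maximal count
  have hnmax : nmax F ≤ 1 + nmax F2 := by
    have hsub : F.filter (fun A' => ∀ B ∈ F, A' ⊆ B → A' = B)
        ⊆ insert A (F2.filter (fun A' => ∀ B ∈ F2, A' ⊆ B → A' = B)) := by
      intro B hB
      simp only [Finset.mem_filter] at hB
      by_cases hBA : B = A
      · simp [hBA]
      · have hBF2 : B ∈ F2 := by
          simp only [hF2, Finset.mem_filter, Finset.mem_erase]
          refine ⟨⟨hBA, hB.1⟩, fun hsubA => hBA (hB.2 A hAF hsubA)⟩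
        exact Finset.mem_insert_of_mem (Finset.mem_filter.mpr
          ⟨hBF2, fun C hC => hB.2 C (hF2F hC)⟩)
    calc nmax F ≤ (insert A (F2.filter (fun A' => ∀ B ∈ F2, A' ⊆ B → A' = B))).card :=
          Finset.card_le_card hsub
      _ ≤ 1 + nmax F2 := by
          rw [add_comm]; exact Finset.card_insert_le _ _
  -- key : F1.card + 2 ≤ A.card
  have hkey : F1.card + 2 ≤ A.card := by
    rcases F1.eq_empty_or_nonempty with h1e | h1ne
    · simp [h1e]; exact hsize A hAF
    · have hm1 : 1 ≤ nmax F1 := by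
        obtain ⟨B, hBF1, hBmax⟩ := F1.exists_maximal h1ne
        have : B ∈ F1.filter (fun A' => ∀ C ∈ F1, A' ⊆ C → A' = C) := by
          refine Finset.mem_filter.mpr ⟨hBF1, fun C hC hsub => ?_⟩
          by_contra hne'
          exact hne' (le_antisymm hsub (hBmax hC hsub))
        exact Finset.card_pos.mpr ⟨B, this⟩
      by_cases hm2 : 2 ≤ nmax F1
      · have := IH1
        have h' : F1.card + 2 ≤ (F1.sup id).card := le_trans (by omega) IH1
        exact le_trans h' (Finset.card_le_card hu1)
      · -- nmax F1 = 1
        have hm1' : nmax F1 = 1 := by omega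
        obtain ⟨B0, hB0⟩ := Finset.card_eq_one.mp hm1'
        have hB0F1 : B0 ∈ F1 := by
          have : B0 ∈ F1.filter (fun A' => ∀ C ∈ F1, A' ⊆ C → A' = C) := by
            rw [hB0]; exact Finset.mem_singleton_self _
          exact (Finset.mem_filter.mp this).1
        have hall : ∀ B ∈ F1, B ⊆ B0 := by
          intro B hB
          obtain ⟨C, hBC, hCmax⟩ := F1.exists_le_maximal hB
          have hCmem : C ∈ F1.filter (fun A' => ∀ D ∈ F1, A' ⊆ D → A' = D) := by
            refine Finset.mem_filter.mpr ⟨hCmax.1, fun D hD hsub => ?_⟩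
            exact le_antisymm hsub (hCmax.2 hD hsub)
          rw [hB0, Finset.mem_singleton] at hCmem
          exact hCmem ▸ hBC
        have hu1B0 : F1.sup id ⊆ B0 := Finset.sup_le hall
        have hB0A : B0 ⊂ A :=
          lt_of_le_of_ne (hF1sub B0 hB0F1).2.2 (hF1sub B0 hB0F1).2.1
        have : (F1.sup id).card ≤ B0.card := Finset.card_le_card hu1B0
        have hBA : B0.card < A.card := Finset.card_lt_card hB0A
        omega
  omega


section Main
variable {α : Type*} [DecidableEq α]

lemma occs_mono {w u v : List α} (h : u <+: v) : occs w v ⊆ occs w u := by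
  intro i hi
  simp only [occs, Finset.mem_filter] at hi ⊢
  exact ⟨hi.1, h.trans hi.2⟩

lemma occs_comparable {w u v : List α} {i : ℕ} (hu : i ∈ occs w u) (hv : i ∈ occs w v) :
    u <+: v ∨ v <+: u := by
  simp only [occs, Finset.mem_filter] at hu hv
  exact List.prefix_or_prefix_of_prefix hu.2 hv.2

theorem stmt0_aux (w : List α) (S : Finset (List α))
    (hS : ∀ u ∈ S, MaximalRepeat w u) : S.card ≤ w.length := by
  classical
  rcases S.eq_empty_or_nonempty with rfl | hne
  · simp
  set F := S.image (occs w) with hF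
  have hinj : Set.InjOn (occs w) S := by
    intro u hu v hv heq
    by_contra hne'
    have h2 : 0 < (occs w u).card := lt_of_lt_of_le (by norm_num) (hS u hu).2.1
    obtain ⟨i, hi⟩ := Finset.card_pos.mp h2
    have hiv : i ∈ occs w v := heq ▸ hi
    have hcount : countOcc w u = countOcc w v := by unfold countOcc; rw [heq]
    rcases occs_comparable hi hiv with h | h
    · have := (hS u hu).2.2 v (h.isInfix) (fun e => hne' e.symm)
      omega
    · have := (hS v hv).2.2 u (h.isInfix) hne'
      unfold MaximalRepeat at *
      omega
  have hcardF : F.card = S.card := Finset.card_image_of_injOn hinj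
  have hsize : ∀ A ∈ F, 2 ≤ A.card := by
    intro A hA
    obtain ⟨u, hu, rfl⟩ := Finset.mem_image.mp hA
    exact (hS u hu).2.1
  have hlam : ∀ A ∈ F, ∀ B ∈ F, A ⊆ B ∨ B ⊆ A ∨ Disjoint A B := by
    intro A hA B hB
    obtain ⟨u, hu, rfl⟩ := Finset.mem_image.mp hA
    obtain ⟨v, hv, rfl⟩ := Finset.mem_image.mp hB
    by_cases hd : Disjoint (occs w u) (occs w v)
    · exact Or.inr (Or.inr hd)
    · obtain ⟨i, hiu, hiv⟩ := Finset.not_disjoint_iff.mp hd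
      rcases occs_comparable hiu hiv with h | h
      · exact Or.inr (Or.inl (occs_mono h))
      · exact Or.inl (occs_mono h)
  have hbound := laminar_bound F.card F rfl hsize hlam
  have hmpos : 1 ≤ nmax F := by
    have hFne : F.Nonempty := hne.image _
    obtain ⟨A, hAF, hAmax⟩ := F.exists_maximal hFne
    refine Finset.card_pos.mpr ⟨A, Finset.mem_filter.mpr ⟨hAF, fun B hB hsub => ?_⟩⟩
    by_contra hne'
    exact hne' (le_antisymm hsub (hAmax hB hsub))
  have hsup : F.sup id ≤ Finset.range (w.length + 1) :=
    Finset.sup_le (fun A hA => by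
      obtain ⟨u, hu, rfl⟩ := Finset.mem_image.mp hA
      exact Finset.filter_subset _ _)
  have := Finset.card_le_card hsup
  rw [Finset.card_range] at this
  omega

end Main

/-- The number of (distinct) maximal repeats in a string of length `n` is at most `n`. -/
theorem stmt0 {α : Type*} [DecidableEq α] (w : List α) (S : Finset (List α))
    (hS : ∀ u ∈ S, MaximalRepeat w u) : S.card ≤ w.length := stmt0_aux w S hS
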